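/- Let q be a prime power and suppose there exists an F_{q²}-linear code C ⊆ F_{q²}^n of dimension d - 1 with C ⊆ C* such that the Hermitian dual C* has minimum distance exactly d (so C* is an MDS code [n, n+1-d, d]_{q²}). Then for every integer s with 0 ≤ s < d there exists an F_{q²}-linear code C_s ⊆ F_{q²}^{n-s} of dimension d - 1 - s with C_s ⊆ C_s* such that C_s* has minimum distance exactly d - s; equivalently, the existence of a quantum MDS code [[n, n+2-2d, d]]_q implies the existence of quantum MDS codes [[n-s, n+s+2-2d, d-s]]_q for all 0 ≤ s < d. -/

import Mathlib

set_option linter.unusedSectionVars false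
set_option maxHeartbeats 1000000
set_option synthInstance.maxHeartbeats 400000

open Finset Module

section Aux

variable {E : Type} [Field E] [Fintype E] [DecidableEq E] {q : ℕ}

private lemma powq_neg (hq0 : q ≠ 0) (hadd : ∀ x y : E, (x + y) ^ q = x ^ q + y ^ q)
    (z : E) : (-z) ^ q = -(z ^ q) := by
  have h := hadd z (-z)
  rw [add_neg_cancel, zero_pow hq0] at h
  exact eq_neg_of_add_eq_zero_right h.symm

private lemma powq_inj (hq0 : q ≠ 0) (hadd : ∀ x y : E, (x + y) ^ q = x ^ q + y ^ q) :
    Function.Injective (fun x : E => x ^ q) := by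
  intro x y h
  simp only at h
  have h2 : (x + -y) ^ q = 0 := by
    rw [hadd, powq_neg hq0 hadd, h, add_neg_cancel]
  have h3 : x + -y = 0 := pow_eq_zero_iff hq0 |>.mp h2
  have : x - y = 0 := by rwa [sub_eq_add_neg]
  exact sub_eq_zero.mp this

private lemma powq_surj (hq0 : q ≠ 0) (hadd : ∀ x y : E, (x + y) ^ q = x ^ q + y ^ q) :
    Function.Surjective (fun x : E => x ^ q) :=
  Finite.injective_iff_surjective.mp (powq_inj hq0 hadd)

private lemma powq_sum (hq0 : q ≠ 0) (hadd : ∀ x y : E, (x + y) ^ q = x ^ q + y ^ q)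
    {ι : Type*} (s : Finset ι) (f : ι → E) :
    (∑ i ∈ s, f i) ^ q = ∑ i ∈ s, (f i) ^ q := by
  classical
  induction s using Finset.induction_on with
  | empty => simp [zero_pow hq0]
  | insert _ _ h ih => rw [Finset.sum_insert h, Finset.sum_insert h, hadd, ih]

/-- The (Hermitian-type) dual code of a subspace. -/
private def dualSub (q : ℕ) {E : Type} [Field E] [Fintype E] {N : ℕ}
    (W : Submodule E (Fin N → E)) : Submodule E (Fin N → E) where
  carrier := {v | ∀ c ∈ W, ∑ i, (c i) ^ q * v i = 0}
  zero_mem' := by intro c _; simp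
  add_mem' := by
    intro a b ha hb c hc
    simp only [Set.mem_setOf_eq] at ha hb ⊢
    simp only [Pi.add_apply, mul_add, Finset.sum_add_distrib, ha c hc, hb c hc, add_zero]
  smul_mem' := by
    intro r v hv c hc
    simp only [Set.mem_setOf_eq] at hv ⊢
    simp only [Pi.smul_apply, smul_eq_mul]
    calc ∑ i, c i ^ q * (r * v i) = r * ∑ i, c i ^ q * v i := by
          rw [Finset.mul_sum]; exact Finset.sum_congr rfl fun i _ => by ring
      _ = 0 := by rw [hv c hc, mul_zero]

private lemma mem_dualSub {N : ℕ} {W : Submodule E (Fin N → E)} {v : Fin N → E} :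
    v ∈ dualSub q W ↔ ∀ c ∈ W, ∑ i, (c i) ^ q * v i = 0 := Iff.rfl

private theorem finrank_dualSub (hq0 : q ≠ 0)
    (hadd : ∀ x y : E, (x + y) ^ q = x ^ q + y ^ q)
    {N : ℕ} (W : Submodule E (Fin N → E)) :
    finrank E (dualSub q W) = N - finrank E W := by
  classical
  set k := finrank E W with hk
  let b := Module.finBasis E W
  let bv : Fin k → (Fin N → E) := fun j => (b j : Fin N → E)
  let M : Matrix (Fin k) (Fin N) E := fun j i => (bv j i) ^ q
  have hspan : Submodule.span E (Set.range bv) = W := by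
    have h1 := congrArg (Submodule.map W.subtype) b.span_eq
    rwa [Submodule.map_span, Submodule.map_top, Submodule.range_subtype,
      ← Set.range_comp] at h1
  have hker : dualSub q W = LinearMap.ker M.mulVecLin := by
    ext v
    constructor
    · intro hv
      rw [LinearMap.mem_ker]
      funext j
      exact hv (bv j) (b j).2
    · intro hv
      intro c hc
      rw [← hspan] at hc
      induction hc using Submodule.span_induction with
      | mem x hx =>
        obtain ⟨j, rfl⟩ := hx
        have h2 := congrFun (LinearMap.mem_ker.mp hv) j
        exact h2
      | zero => simp [zero_pow hq0]
      | add x y _ _ hx hy =>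
        simp only [Pi.add_apply, hadd, add_mul, Finset.sum_add_distrib, hx, hy, add_zero]
      | smul r x _ hx =>
        simp only [Pi.smul_apply, smul_eq_mul, mul_pow, mul_assoc, ← Finset.mul_sum, hx,
          mul_zero]
  have hbvli : LinearIndependent E bv := b.linearIndependent.map' W.subtype W.ker_subtype
  have hli : LinearIndependent E (fun j => M j) := by
    rw [Fintype.linearIndependent_iff]
    intro g hg
    choose μ hμ using fun j => powq_surj hq0 hadd (g j)
    have hz : ∑ j, μ j • bv j = 0 := by
      funext i
      have h1 : (∑ j, μ j • bv j) i = ∑ j, μ j * bv j i := by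
        simp [Finset.sum_apply]
      have h3 := congrFun hg i
      simp only [Finset.sum_apply, Pi.smul_apply, smul_eq_mul, Pi.zero_apply] at h3
      have h2 : (∑ j, μ j * bv j i) ^ q = 0 := by
        rw [powq_sum hq0 hadd]
        calc ∑ j, (μ j * bv j i) ^ q = ∑ j, g j * M j i := by
              refine Finset.sum_congr rfl fun j _ => ?_
              rw [mul_pow]
              exact congrArg (fun t => t * bv j i ^ q) (hμ j)
          _ = 0 := h3
      have h4 : ∑ j, μ j * bv j i = 0 := pow_eq_zero_iff hq0 |>.mp h2
      simp [h1, h4]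
    have h5 := Fintype.linearIndependent_iff.mp hbvli μ hz
    intro j
    have h6 := hμ j
    rw [h5 j] at h6
    simpa [zero_pow hq0] using h6.symm
  have hrank : finrank E (LinearMap.range M.mulVecLin) = k := by
    have h6 : M.rank = k := by
      rw [← Matrix.rank_transpose, Matrix.rank, Matrix.range_mulVecLin,
        Matrix.col_transpose]
      have := finrank_span_eq_card (R := E) hli
      exact this.trans (Fintype.card_fin k)
    exact h6
  have h7 := LinearMap.finrank_range_add_finrank_ker M.mulVecLin
  rw [hrank] at h7
  have h8 : finrank E (Fin N → E) = N := by simp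
  rw [h8] at h7
  have h9 : finrank E W ≤ N := by
    have := Submodule.finrank_le W
    simpa using this
  rw [hker]
  omega

private theorem step (hq0 : q ≠ 0) (hadd : ∀ x y : E, (x + y) ^ q = x ^ q + y ^ q)
    {m d : ℕ} (hd : 2 ≤ d) (C : Submodule E (Fin (m + 1) → E))
    (hdim : finrank E C = d - 1)
    (hso : ∀ a ∈ C, ∀ b ∈ C, ∑ i, (a i) ^ q * b i = 0)
    (hlb : ∀ v : Fin (m + 1) → E, (∀ c ∈ C, ∑ i, (c i) ^ q * v i = 0) → v ≠ 0 →
      d ≤ hammingNorm v)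
    (hex : ∃ v : Fin (m + 1) → E, (∀ c ∈ C, ∑ i, (c i) ^ q * v i = 0) ∧ v ≠ 0 ∧
      hammingNorm v = d) :
    ∃ D : Submodule E (Fin m → E),
      finrank E D = d - 2 ∧
      (∀ a ∈ D, ∀ b ∈ D, ∑ i, (a i) ^ q * b i = 0) ∧
      (∀ v : Fin m → E, (∀ c ∈ D, ∑ i, (c i) ^ q * v i = 0) → v ≠ 0 →
        d - 1 ≤ hammingNorm v) ∧
      (∃ v : Fin m → E, (∀ c ∈ D, ∑ i, (c i) ^ q * v i = 0) ∧ v ≠ 0 ∧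
        hammingNorm v = d - 1) := by
  classical
  obtain ⟨v₀, hv₀d, hv₀ne, hv₀w⟩ := hex
  obtain ⟨i, hi⟩ : ∃ i, v₀ i ≠ 0 := Function.ne_iff.mp hv₀ne
  have hnorm : ∀ w : Fin (m + 1) → E,
      hammingNorm w = (if w i ≠ 0 then 1 else 0) +
        hammingNorm (fun j => w (i.succAbove j)) := by
    intro w
    simp only [hammingNorm, Finset.card_filter]
    exact Fin.sum_univ_succAbove (fun j => if w j ≠ 0 then 1 else 0) i
  have hsum : ∀ (c w : Fin (m + 1) → E),
      ∑ j, (c j) ^ q * w j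
        = (c i) ^ q * w i + ∑ j, (c (i.succAbove j)) ^ q * w (i.succAbove j) :=
    fun c w => Fin.sum_univ_succAbove (fun j => (c j) ^ q * w j) i
  have hc₀ : ∃ c₀ ∈ C, c₀ i ≠ 0 := by
    by_contra hcon
    push_neg at hcon
    have h1 : ∀ c ∈ C, ∑ j, (c j) ^ q * (Pi.single (M := fun _ => E) i (1 : E)) j = 0 := by
      intro c hc
      rw [Finset.sum_eq_single i]
      · rw [Pi.single_eq_same, hcon c hc, zero_pow hq0, zero_mul]
      · intro b _ hb; rw [Pi.single_eq_of_ne hb, mul_zero]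
      · simp
    have h2 : (Pi.single (M := fun _ => E) i (1 : E)) ≠ 0 := by
      intro h
      have := congrFun h i
      rw [Pi.single_eq_same] at this
      exact one_ne_zero this
    have h3 := hlb _ h1 h2
    have h4 : hammingNorm (Pi.single (M := fun _ => E) i (1 : E)) ≤ 1 := by
      have h5 := hnorm (Pi.single (M := fun _ => E) i (1 : E))
      have hzero : (fun j => Pi.single (M := fun _ => E) i (1 : E) (i.succAbove j)) = (0 : Fin m → E) :=
        funext fun j => Pi.single_eq_of_ne (Fin.succAbove_ne i j) 1
      rw [hzero, hammingNorm_zero] at h5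
      rw [h5]
      split_ifs <;> omega
    omega
  obtain ⟨c₀, hc₀C, hc₀i⟩ := hc₀
  set π : (Fin (m + 1) → E) →ₗ[E] (Fin m → E) := LinearMap.funLeft E E i.succAbove with hπ
  have hπ_apply : ∀ (w : Fin (m + 1) → E) j, π w j = w (i.succAbove j) := fun _ _ => rfl
  set K : Submodule E (Fin (m + 1) → E) := C ⊓ LinearMap.ker (LinearMap.proj i) with hK
  have hKmem : ∀ x, x ∈ K ↔ x ∈ C ∧ x i = 0 := by
    intro x
    simp [hK, Submodule.mem_inf, LinearMap.mem_ker, LinearMap.proj_apply]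
  set D := K.map π with hD
  have hπinj : ∀ x : Fin (m + 1) → E, x i = 0 → π x = 0 → x = 0 := by
    intro x hxi hx
    funext j'
    show x j' = (0 : E)
    by_cases h : j' = i
    · rw [h]; exact hxi
    · obtain ⟨z, hz⟩ := Fin.exists_succAbove_eq (x := j') (y := i) h
      have := congrFun hx z
      rw [hπ_apply] at this
      rw [← hz]
      exact this
  -- dimension of D
  have hrankK : finrank E K = d - 2 := by
    set g : C →ₗ[E] E := (LinearMap.proj i).comp C.subtype with hg
    have hgr : LinearMap.range g = ⊤ := by
      rw [eq_top_iff]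
      rintro y -
      refine ⟨(y * (c₀ i)⁻¹) • ⟨c₀, hc₀C⟩, ?_⟩
      show (y * (c₀ i)⁻¹) • c₀ i = y
      rw [smul_eq_mul]
      field_simp
    have h5 := LinearMap.finrank_range_add_finrank_ker g
    rw [hgr, finrank_top, finrank_self, hdim] at h5
    have hKg : K = (LinearMap.ker g).map C.subtype := by
      ext x
      rw [hKmem]
      constructor
      · rintro ⟨hxC, hxi⟩
        exact ⟨⟨x, hxC⟩, by simpa [hg, LinearMap.mem_ker] using hxi, rfl⟩
      · rintro ⟨⟨x, hxC⟩, hxk, rfl⟩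
        exact ⟨hxC, by simpa [hg, LinearMap.mem_ker] using hxk⟩
    rw [hKg, Submodule.finrank_map_subtype_eq]
    omega
  have hrankD : finrank E D = d - 2 := by
    have hinj : Function.Injective (π.domRestrict K) := by
      rw [← LinearMap.ker_eq_bot, LinearMap.ker_eq_bot']
      intro x hx
      have h6 := hπinj x ((hKmem x).mp x.2).2 hx
      exact Subtype.ext h6
    have e := LinearEquiv.ofInjective (π.domRestrict K) hinj
    have hr : LinearMap.range (π.domRestrict K) = D := LinearMap.range_domRestrict K π
    rw [← hr, ← e.finrank_eq]
    exact hrankK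
  -- self-orthogonality of D
  have hDso : ∀ a ∈ D, ∀ b ∈ D, ∑ j, (a j) ^ q * b j = 0 := by
    intro a ha b hb
    obtain ⟨c, hcK, rfl⟩ := Submodule.mem_map.mp ha
    obtain ⟨c', hc'K, rfl⟩ := Submodule.mem_map.mp hb
    obtain ⟨hcC, hci⟩ := (hKmem c).mp hcK
    obtain ⟨hc'C, hc'i⟩ := (hKmem c').mp hc'K
    have h7 := hsum c c'
    rw [hso c hcC c' hc'C, hci, zero_pow hq0, zero_mul, zero_add] at h7
    simp only [hπ_apply]
    exact h7.symm
  -- mapping the dual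
  have hmapdual : ∀ u ∈ dualSub q C, π u ∈ dualSub q D := by
    intro u hu a ha
    obtain ⟨c, hcK, rfl⟩ := Submodule.mem_map.mp ha
    obtain ⟨hcC, hci⟩ := (hKmem c).mp hcK
    have h7 := hsum c u
    rw [hu c hcC, hci, zero_pow hq0, zero_mul, zero_add] at h7
    simp only [hπ_apply]
    exact h7.symm
  have hdualC : finrank E (dualSub q C) = m + 1 - (d - 1) := by
    rw [finrank_dualSub hq0 hadd, hdim]
  have hdualD : finrank E (dualSub q D) = m - (d - 2) := by
    rw [finrank_dualSub hq0 hadd, hrankD]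
  have hπdinj : Function.Injective (π.domRestrict (dualSub q C)) := by
    rw [← LinearMap.ker_eq_bot, LinearMap.ker_eq_bot']
    intro u hu
    by_contra hne
    have hune : (u : Fin (m + 1) → E) ≠ 0 := fun h => hne (Subtype.ext h)
    have h8 := hlb u u.2 hune
    have h9 : hammingNorm (u : Fin (m + 1) → E) ≤ 1 := by
      rw [hnorm u]
      have h10 : (fun j => (u : Fin (m + 1) → E) (i.succAbove j)) = 0 := by
        funext j
        exact congrFun (show π (u : Fin (m + 1) → E) = 0 from hu) j
      rw [h10]
      simp only [hammingNorm]
      split_ifs <;> simp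
    omega
  have e2 := LinearEquiv.ofInjective (π.domRestrict (dualSub q C)) hπdinj
  have hrange2 : LinearMap.range (π.domRestrict (dualSub q C)) = (dualSub q C).map π :=
    LinearMap.range_domRestrict _ _
  have hle : (dualSub q C).map π ≤ dualSub q D := by
    rintro w ⟨u, hu, rfl⟩
    exact hmapdual u hu
  have heq : (dualSub q C).map π = dualSub q D := by
    apply Submodule.eq_of_le_of_finrank_le hle
    rw [hdualD, ← hrange2, ← e2.finrank_eq, hdualC]
    have hdm : d ≤ m + 1 := by
      have : hammingNorm v₀ ≤ m + 1 := by
        simpa [hammingNorm] using Finset.card_le_card (Finset.filter_subset _ (Finset.univ : Finset (Fin (m+1))))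
      omega
    omega
  -- lower bound for the dual of D
  have hDlb : ∀ v : Fin m → E, (∀ c ∈ D, ∑ j, (c j) ^ q * v j = 0) → v ≠ 0 →
      d - 1 ≤ hammingNorm v := by
    intro v hv hvne
    have hvD : v ∈ dualSub q D := hv
    rw [← heq] at hvD
    obtain ⟨u, hu, rfl⟩ := hvD
    have hune : u ≠ 0 := by rintro rfl; exact hvne (map_zero π)
    have h8 := hlb u hu hune
    have h9 := hnorm u
    have h10 : (fun j => u (i.succAbove j)) = π u := rfl
    rw [h10] at h9
    split_ifs at h9 <;> omega
  -- existence of a weight d-1 dual vector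
  have hπv₀ : π v₀ ∈ dualSub q D := hmapdual v₀ hv₀d
  have hwt : hammingNorm (π v₀) = d - 1 := by
    have h9 := hnorm v₀
    have h10 : (fun j => v₀ (i.succAbove j)) = π v₀ := rfl
    rw [h10, hv₀w, if_pos hi] at h9
    omega
  have hne' : π v₀ ≠ 0 := by
    intro h
    rw [h] at hwt
    simp [hammingNorm] at hwt
    omega
  exact ⟨D, hrankD, hDso, hDlb, ⟨π v₀, hπv₀, hne', hwt⟩⟩

end Aux



/-- For `q` a prime power, suppose there is an `F_{q²}`-linear code
`C ⊆ F_{q²}^n` of dimension `d - 1` with `C ⊆ C*` (Hermitian dual) whose dual `C*` has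
minimum distance exactly `d` (so `C*` is MDS `[n, n+1-d, d]_{q²}`, giving a quantum MDS
code `[[n, n+2-2d, d]]_q`). Then for every `0 ≤ s < d` there is an `F_{q²}`-linear code
`C_s ⊆ F_{q²}^{n-s}` of dimension `d - 1 - s` with `C_s ⊆ C_s*` whose dual has minimum
distance exactly `d - s` (giving quantum MDS codes `[[n-s, n+s+2-2d, d-s]]_q`). -/
theorem stmt_17 (q n d : ℕ) (E : Type) [Field E] [Fintype E] [DecidableEq E]
    (hE : Fintype.card E = q ^ 2)
    (C : Submodule E (Fin n → E)) (hdim : Module.finrank E C = d - 1)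
    (hso : ∀ a ∈ C, ∀ b ∈ C, ∑ i, (a i) ^ q * b i = 0)
    (hlb : ∀ v : Fin n → E, (∀ c ∈ C, ∑ i, (c i) ^ q * v i = 0) → v ≠ 0 →
      d ≤ hammingNorm v)
    (hex : ∃ v : Fin n → E, (∀ c ∈ C, ∑ i, (c i) ^ q * v i = 0) ∧ v ≠ 0 ∧
      hammingNorm v = d) :
    ∀ s : ℕ, s < d →
      ∃ D : Submodule E (Fin (n - s) → E),
        Module.finrank E D = d - 1 - s ∧
        (∀ a ∈ D, ∀ b ∈ D, ∑ i, (a i) ^ q * b i = 0) ∧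
        (∀ v : Fin (n - s) → E, (∀ c ∈ D, ∑ i, (c i) ^ q * v i = 0) → v ≠ 0 →
          d - s ≤ hammingNorm v) ∧
        (∃ v : Fin (n - s) → E, (∀ c ∈ D, ∑ i, (c i) ^ q * v i = 0) ∧ v ≠ 0 ∧
          hammingNorm v = d - s) := by
  classical
  have hq2 : 2 ≤ q := by
    have h1 : 1 < Fintype.card E := Fintype.one_lt_card
    rw [hE] at h1
    by_contra h
    push_neg at h
    interval_cases q <;> simp_all
  have hq0 : q ≠ 0 := by omega
  have hadd : ∀ x y : E, (x + y) ^ q = x ^ q + y ^ q := by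
    have hpp : (ringChar E).Prime := CharP.char_is_prime E (ringChar E)
    haveI := Fact.mk hpp
    obtain ⟨m, -, hcard⟩ := FiniteField.card E (ringChar E)
    have hdvd : q ∣ (ringChar E) ^ (m : ℕ) := by
      rw [← hcard, hE]
      exact dvd_pow_self q two_ne_zero
    obtain ⟨a, -, rfl⟩ := (Nat.dvd_prime_pow hpp).mp hdvd
    intro x y
    exact add_pow_char_pow ..
  intro s
  induction s with
  | zero =>
    intro _
    exact ⟨C, hdim, hso, hlb, hex⟩
  | succ s ih =>
    intro hs
    obtain ⟨D, h1, h2, h3, h4⟩ := ih (by omega)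
    have hpos : 1 ≤ n - s := by
      obtain ⟨v, -, hvne, hw⟩ := h4
      have hle : hammingNorm v ≤ n - s := by
        simpa [hammingNorm] using
          Finset.card_le_card (Finset.filter_subset (fun j => v j ≠ 0)
            (Finset.univ : Finset (Fin (n - s))))
      omega
    obtain ⟨m', hm'⟩ : ∃ m', n - s = m' + 1 := ⟨n - s - 1, by omega⟩
    rw [show n - (s + 1) = m' from by omega]
    revert D
    rw [hm']
    intro D h1 h2 h3 h4
    have hd2 : 2 ≤ d - s := by omega
    have h1' : Module.finrank E D = d - s - 1 := by rw [h1]; omega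
    obtain ⟨D', k1, k2, k3, k4⟩ := step hq0 hadd hd2 D h1' h2 h3 h4
    refine ⟨D', ?_, k2, ?_, ?_⟩
    · rw [k1]; omega
    · intro v hv hvne
      have := k3 v hv hvne
      omega
    · obtain ⟨v, kv1, kv2, kv3⟩ := k4
      exact ⟨v, kv1, kv2, by omega⟩
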